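/- With the setup of empirical and population gradient descent as above, the one-step expansion holds pointwise: ‖w^S_{t+1} − w^D_{t+1}‖² ≤ ‖w^S_t − w^D_t‖² + 2η(∇F_D(w^D_t) − ∇F_S(w^D_t))·(w^S_t − w^D_t) + 4η²L². -/

import Mathlib

open scoped RealInnerProductSpace

private lemma grad_norm_le {d : ℕ} {f : EuclideanSpace ℝ (Fin d) → ℝ} {L : ℝ}
    (hL : 0 ≤ L) (hlip : LipschitzWith L.toNNReal f) (x : EuclideanSpace ℝ (Fin d)) :
    ‖gradient f x‖ ≤ L := by
  have h : ‖fderiv ℝ f x‖ ≤ (L.toNNReal : ℝ) := norm_fderiv_le_of_lipschitz ℝ hlip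
  calc ‖gradient f x‖ = ‖fderiv ℝ f x‖ := (InnerProductSpace.toDual ℝ _).symm.norm_map _
  _ ≤ L := by rwa [Real.coe_toNNReal _ hL] at h

private lemma grad_mono {d : ℕ} {f : EuclideanSpace ℝ (Fin d) → ℝ}
    (hconv : ConvexOn ℝ Set.univ f) (hdiff : Differentiable ℝ f)
    (x y : EuclideanSpace ℝ (Fin d)) :
    0 ≤ ⟪gradient f x - gradient f y, x - y⟫ := by
  set g : ℝ → ℝ := fun t => f (t • (x - y) + y) with hg
  have hgc : ConvexOn ℝ Set.univ g := by
    have hfun : g = f ∘ (AffineMap.lineMap y x) := by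
      funext t
      simp [hg, AffineMap.lineMap_apply, Function.comp]
    have := hconv.comp_affineMap (AffineMap.lineMap y x)
    rw [Set.preimage_univ] at this
    rwa [hfun]
  have hderiv : ∀ t : ℝ, HasDerivAt g ⟪gradient f (t • (x - y) + y), x - y⟫ t := by
    intro t
    have hc : HasDerivAt (fun t : ℝ => t • (x - y) + y) (x - y) t := by
      simpa using ((hasDerivAt_id t).smul_const (x - y)).add_const y
    have hf : HasFDerivAt f
        ((InnerProductSpace.toDual ℝ _) (gradient f (t • (x - y) + y))) (t • (x - y) + y) :=
      (hasGradientAt_iff_hasFDerivAt.mp (hdiff _).hasGradientAt)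
    have := hf.comp_hasDerivAt t hc
    simpa [InnerProductSpace.toDual_apply_apply, hg, Function.comp_def] using this
  have hmono := hgc.monotoneOn_deriv (fun t _ => ((hderiv t).differentiableAt))
  have h01 : deriv g 0 ≤ deriv g 1 :=
    hmono (Set.mem_univ 0) (Set.mem_univ 1) zero_le_one
  rw [(hderiv 0).deriv, (hderiv 1).deriv] at h01
  simp only [zero_smul, one_smul, zero_add, sub_add_cancel] at h01
  rw [inner_sub_left]
  linarith

theorem stmt_7 (d : ℕ) (FS FD : EuclideanSpace ℝ (Fin d) → ℝ) (η L : ℝ)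
    (hη : 0 ≤ η) (hL : 0 ≤ L)
    (hconvS : ConvexOn ℝ Set.univ FS) (hconvD : ConvexOn ℝ Set.univ FD)
    (hdiffS : Differentiable ℝ FS) (hdiffD : Differentiable ℝ FD)
    (hlipS : LipschitzWith L.toNNReal FS) (hlipD : LipschitzWith L.toNNReal FD)
    (wS wD : EuclideanSpace ℝ (Fin d)) :
    ‖(wS - η • gradient FS wS) - (wD - η • gradient FD wD)‖ ^ 2
      ≤ ‖wS - wD‖ ^ 2
        + 2 * η * ⟪gradient FD wD - gradient FS wD, wS - wD⟫
        + 4 * η ^ 2 * L ^ 2 := by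
  set gS := gradient FS wS
  set gD := gradient FD wD
  set gSD := gradient FS wD
  set a := wS - wD
  have hrw : (wS - η • gS) - (wD - η • gD) = a - η • (gS - gD) := by
    simp [a, smul_sub]; abel
  rw [hrw]
  have hexp : ‖a - η • (gS - gD)‖ ^ 2
      = ‖a‖ ^ 2 - 2 * (η * ⟪gS - gD, a⟫) + η ^ 2 * ‖gS - gD‖ ^ 2 := by
    rw [norm_sub_sq_real, real_inner_smul_right, real_inner_comm a (gS - gD), norm_smul,
      Real.norm_eq_abs, abs_of_nonneg hη]
    ring
  rw [hexp]
  have hmonoS : 0 ≤ ⟪gS - gSD, a⟫ := grad_mono hconvS hdiffS wS wD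
  have hnorm : ‖gS - gD‖ ≤ 2 * L := by
    calc ‖gS - gD‖ ≤ ‖gS‖ + ‖gD‖ := norm_sub_le _ _
    _ ≤ L + L := add_le_add (grad_norm_le hL hlipS wS) (grad_norm_le hL hlipD wD)
    _ = 2 * L := by ring
  have hnormsq : η ^ 2 * ‖gS - gD‖ ^ 2 ≤ 4 * η ^ 2 * L ^ 2 := by
    have h1 : ‖gS - gD‖ ^ 2 ≤ (2 * L) ^ 2 := by
      nlinarith [norm_nonneg (gS - gD)]
    nlinarith [sq_nonneg η]
  have hsplit : ⟪gS - gD, a⟫ = ⟪gS - gSD, a⟫ - ⟪gD - gSD, a⟫ := by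
    rw [← inner_sub_left]; congr 1; abel
  have hpos : 0 ≤ η * ⟪gS - gSD, a⟫ := mul_nonneg hη hmonoS
  rw [hsplit]
  linarith
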